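/- Let μ_0, μ_1 be Borel probability measures on (0,∞) with ∫ (x + 1/x) dμ_i(x) < ∞ for i = 0,1, satisfying μ_0 ≼_cx μ_1, with common mean m = ∫ x dμ_0(x) = ∫ x dμ_1(x), and set ν_i = Id_‡μ_i. Then a subset I ⊆ ℝ is a connected component of {z ∈ ℝ : U_{ν_0}(z) < U_{ν_1}(z)} if and only if the set {m/x : x ∈ I} is a connected component of {z ∈ ℝ : U_{μ_0}(z) < U_{μ_1}(z)}. -/

import Mathlib

open MeasureTheory Set

/-- The reflected measure `Id_† μ`: the pushforward under `x ↦ 1/x` of the measure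
with density `x / m` with respect to `μ`, where `m = ∫ x ∂μ` is the mean of `μ`. -/
noncomputable def reflect (μ : Measure ℝ) : Measure ℝ :=
  Measure.map (fun x => x⁻¹) (μ.withDensity (fun x => ENNReal.ofReal (x / ∫ y, y ∂μ)))

/-- The normalised reflected measure `Id_‡ μ := Id_† μ̃`, where `μ̃` is the pushforward
of `μ` under `x ↦ x/m` and `m = ∫ x ∂μ`. -/
noncomputable def reflectNorm (μ : Measure ℝ) : Measure ℝ :=
  reflect (Measure.map (fun x => x / ∫ y, y ∂μ) μ)

/-- The potential function of a measure `ρ` on `ℝ`: `U_ρ(z) = ∫ |x - z| dρ(x)`. -/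
noncomputable def potential (ρ : Measure ℝ) (z : ℝ) : ℝ := ∫ x, |x - z| ∂ρ

/-- Convex order: `η ≼_cx ρ` iff `∫ f dη ≤ ∫ f dρ` (with integrals valued in `[0,∞]`)
for every convex function `f : ℝ → [0,∞)`. -/
def ConvexOrder (η ρ : Measure ℝ) : Prop :=
  ∀ f : ℝ → ℝ, ConvexOn ℝ Set.univ f → (∀ x, 0 ≤ f x) →
    ∫⁻ x, ENNReal.ofReal (f x) ∂η ≤ ∫⁻ x, ENNReal.ofReal (f x) ∂ρ

/-- `I` is a connected component of `A` (in the subspace sense). -/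
def IsConnComp (I A : Set ℝ) : Prop := ∃ x ∈ A, I = connectedComponentIn A x

open scoped NNReal ENNReal in
lemma pipeline (μ : Measure ℝ) [IsProbabilityMeasure μ]
    (hsupp : μ (Set.Ioi (0:ℝ))ᶜ = 0)
    (m : ℝ) (hm : m = ∫ x, x ∂μ) (hmpos : 0 < m) (z : ℝ) :
    potential (reflectNorm μ) z = ∫ x, (x / m) * |m / x - z| ∂μ := by
  have hmeas : Measurable (fun x : ℝ => x / m) := measurable_id.div_const m
  have hae : ∀ᵐ x ∂μ, 0 < x := by
    rw [ae_iff]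
    convert hsupp using 2
    ext x; simp
  have hmean : (∫ y, y ∂(Measure.map (fun x : ℝ => x / m) μ)) = 1 := by
    rw [integral_map (f := fun y : ℝ => y) hmeas.aemeasurable measurable_id.aestronglyMeasurable]
    rw [integral_div, ← hm, div_self hmpos.ne']
  unfold potential reflectNorm reflect
  rw [← hm, hmean]
  rw [integral_map (f := fun x : ℝ => |x - z|) measurable_inv.aemeasurable (continuous_abs.comp (continuous_id.sub continuous_const)).aestronglyMeasurable]
  have hdens : (fun x : ℝ => ENNReal.ofReal (x / 1)) =
      fun x : ℝ => ((Real.toNNReal x : ℝ≥0) : ℝ≥0∞) := by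
    simp [ENNReal.ofReal]
  rw [hdens, integral_withDensity_eq_integral_smul measurable_real_toNNReal]
  rw [integral_map (f := fun x : ℝ => (Real.toNNReal x) • |x⁻¹ - z|) hmeas.aemeasurable]
  · refine integral_congr_ae (hae.mono fun x hx => ?_)
    have hxm : 0 < x / m := div_pos hx hmpos
    simp only [NNReal.smul_def, Real.coe_toNNReal _ hxm.le, smul_eq_mul, inv_div]
  · apply Measurable.aestronglyMeasurable
    exact (measurable_real_toNNReal.coe_nnreal_real).smul
      ((measurable_inv.sub measurable_const).abs)

lemma ae_pos (μ : Measure ℝ) (hsupp : μ (Set.Ioi (0:ℝ))ᶜ = 0) : ∀ᵐ x ∂μ, 0 < x := by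
  rw [ae_iff]; convert hsupp using 2; ext x; simp

lemma mean_pos (μ : Measure ℝ) [IsProbabilityMeasure μ]
    (hsupp : μ (Set.Ioi (0:ℝ))ᶜ = 0) (hint : Integrable (fun x => x + x⁻¹) μ)
    (m : ℝ) (hm : m = ∫ x, x ∂μ) : 0 < m := by
  have hae := ae_pos μ hsupp
  have hid : Integrable (fun x : ℝ => x) μ := by
    refine hint.mono measurable_id.aestronglyMeasurable (hae.mono fun x hx => ?_)
    rw [Real.norm_eq_abs, Real.norm_eq_abs, abs_of_pos hx,
      abs_of_pos (by positivity : (0:ℝ) < x + x⁻¹)]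
    nlinarith [inv_pos.2 hx]
  rcases lt_or_eq_of_le (integral_nonneg_of_ae (hae.mono fun x hx => hx.le)) with h | h
  · exact hm ▸ h
  · exfalso
    have h0 : (fun x : ℝ => x) =ᵐ[μ] 0 :=
      (integral_eq_zero_iff_of_nonneg_ae (hae.mono fun x hx => hx.le) hid).1 h.symm
    have : ∀ᵐ x ∂μ, False := by
      filter_upwards [hae, h0] with x hx h0x
      exact absurd h0x hx.ne'
    simp [ae_iff] at this

lemma potential_at_zero (μ : Measure ℝ) (hsupp : μ (Set.Ioi (0:ℝ))ᶜ = 0)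
    (m : ℝ) (hm : m = ∫ x, x ∂μ) : potential μ 0 = m := by
  rw [hm, potential]
  refine integral_congr_ae ((ae_pos μ hsupp).mono fun x hx => ?_)
  simp [abs_of_pos hx]

lemma reflect_potential_at_zero (μ : Measure ℝ) [IsProbabilityMeasure μ]
    (hsupp : μ (Set.Ioi (0:ℝ))ᶜ = 0)
    (m : ℝ) (hm : m = ∫ x, x ∂μ) (hmpos : 0 < m) :
    potential (reflectNorm μ) 0 = 1 := by
  rw [pipeline μ hsupp m hm hmpos 0]
  have : ∫ x, (x / m) * |m / x - 0| ∂μ = ∫ x, (1:ℝ) ∂μ := by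
    refine integral_congr_ae ((ae_pos μ hsupp).mono fun x hx => ?_)
    simp only
    rw [sub_zero, abs_of_pos (div_pos hmpos hx)]
    field_simp
  rw [this]; simp

lemma reflect_potential (μ : Measure ℝ) [IsProbabilityMeasure μ]
    (hsupp : μ (Set.Ioi (0:ℝ))ᶜ = 0)
    (m : ℝ) (hm : m = ∫ x, x ∂μ) (hmpos : 0 < m) (z : ℝ) (hz : z ≠ 0) :
    potential (reflectNorm μ) z = (|z| / m) * potential μ (m / z) := by
  rw [pipeline μ hsupp m hm hmpos z, potential, ← integral_const_mul]
  refine integral_congr_ae ((ae_pos μ hsupp).mono fun x hx => ?_)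
  simp only
  have h1 : x / m * |m / x - z| = |x * (m / x - z)| / m := by
    rw [abs_mul, abs_of_pos hx]; ring
  have h2 : |z| / m * |x - m / z| = |z * (x - m / z)| / m := by
    rw [abs_mul]; ring
  rw [h1, h2]
  have : x * (m / x - z) = -(z * (x - m / z)) := by field_simp; ring
  rw [this, abs_neg]

lemma image_ccIn {f : ℝ → ℝ} {A B : Set ℝ} (hf : ContinuousOn f A)
    (hAB : Set.MapsTo f A B) {x : ℝ} (hx : x ∈ A) :
    f '' connectedComponentIn A x ⊆ connectedComponentIn B (f x) := by
  refine IsPreconnected.subset_connectedComponentIn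
    (isPreconnected_connectedComponentIn.image f (hf.mono (connectedComponentIn_subset A x)))
    ⟨x, mem_connectedComponentIn hx, rfl⟩ ?_
  exact (Set.image_mono (f := f) (connectedComponentIn_subset A x)).trans hAB.image_subset


/-- For Borel probability measures `μ₀, μ₁` on `(0,∞)` with `∫ (x + 1/x) dμᵢ < ∞`,
`μ₀ ≼_cx μ₁`, common mean `m`, and `νᵢ = Id_‡ μᵢ`: `I` is a connected component of
`{U_{ν₀} < U_{ν₁}}` iff `{m/x : x ∈ I}` is a connected component of `{U_{μ₀} < U_{μ₁}}`. -/
theorem stmt6 (μ₀ μ₁ : Measure ℝ) [IsProbabilityMeasure μ₀] [IsProbabilityMeasure μ₁]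
    (hsupp₀ : μ₀ (Set.Ioi (0:ℝ))ᶜ = 0) (hsupp₁ : μ₁ (Set.Ioi (0:ℝ))ᶜ = 0)
    (hint₀ : Integrable (fun x => x + x⁻¹) μ₀)
    (hint₁ : Integrable (fun x => x + x⁻¹) μ₁)
    (hcx : ConvexOrder μ₀ μ₁)
    (m : ℝ) (hm : m = ∫ x, x ∂μ₀) (hcommon : m = ∫ x, x ∂μ₁) :
    ∀ I : Set ℝ,
      IsConnComp I {z : ℝ | potential (reflectNorm μ₀) z < potential (reflectNorm μ₁) z}
        ↔ IsConnComp ((fun x => m / x) '' I)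
            {z : ℝ | potential μ₀ z < potential μ₁ z} := by
  have hmpos : 0 < m := mean_pos μ₀ hsupp₀ hint₀ m hm
  set φ : ℝ → ℝ := fun x => m / x with hφ
  set A := {z : ℝ | potential (reflectNorm μ₀) z < potential (reflectNorm μ₁) z} with hA
  set B := {z : ℝ | potential μ₀ z < potential μ₁ z} with hB
  have h0A : (0:ℝ) ∉ A := by
    simp only [hA, mem_setOf_eq, reflect_potential_at_zero μ₀ hsupp₀ m hm hmpos,
      reflect_potential_at_zero μ₁ hsupp₁ m hcommon hmpos, lt_self_iff_false, not_false_iff]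
  have h0B : (0:ℝ) ∉ B := by
    simp only [hB, mem_setOf_eq, potential_at_zero μ₀ hsupp₀ m hm,
      potential_at_zero μ₁ hsupp₁ m hcommon, lt_self_iff_false, not_false_iff]
  have hchar : ∀ z : ℝ, z ≠ 0 → (z ∈ A ↔ φ z ∈ B) := by
    intro z hz
    simp only [hA, hB, mem_setOf_eq, hφ,
      reflect_potential μ₀ hsupp₀ m hm hmpos z hz,
      reflect_potential μ₁ hsupp₁ m hcommon hmpos z hz]
    exact mul_lt_mul_iff_right₀ (div_pos (abs_pos.2 hz) hmpos)
  have hφφ : ∀ x : ℝ, x ≠ 0 → φ (φ x) = x := by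
    intro x hx; simp only [hφ]; field_simp
  have hφne : ∀ x : ℝ, x ≠ 0 → φ x ≠ 0 := fun x hx => div_ne_zero hmpos.ne' hx
  have hAne : ∀ z ∈ A, z ≠ 0 := fun z hz h0 => h0A (h0 ▸ hz)
  have hBne : ∀ z ∈ B, z ≠ 0 := fun z hz h0 => h0B (h0 ▸ hz)
  have hABm : Set.MapsTo φ A B := fun z hz => (hchar z (hAne z hz)).1 hz
  have hBAm : Set.MapsTo φ B A := by
    intro w hw
    have hw0 := hBne w hw
    exact (hchar (φ w) (hφne w hw0)).2 (by rwa [hφφ w hw0])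
  have hcont : ∀ S : Set ℝ, (∀ z ∈ S, z ≠ 0) → ContinuousOn φ S := by
    intro S hS
    exact continuousOn_const.div continuousOn_id hS
  -- image of a component is a component
  have hkey : ∀ x ∈ A, φ '' connectedComponentIn A x = connectedComponentIn B (φ x) := by
    intro x hx
    refine subset_antisymm (image_ccIn (hcont A hAne) hABm hx) ?_
    intro w hw
    have hw0 : w ≠ 0 := hBne w (connectedComponentIn_subset B (φ x) hw)
    have hsub := image_ccIn (hcont B hBne) hBAm (hABm hx)
    rw [hφφ x (hAne x hx)] at hsub
    have : φ w ∈ connectedComponentIn A x := hsub ⟨w, hw, rfl⟩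
    exact ⟨φ w, this, hφφ w hw0⟩
  have hkeyB : ∀ w ∈ B, φ '' connectedComponentIn B w = connectedComponentIn A (φ w) := by
    intro w hw
    refine subset_antisymm (image_ccIn (hcont B hBne) hBAm hw) ?_
    intro z hz
    have hz0 : z ≠ 0 := hAne z (connectedComponentIn_subset A (φ w) hz)
    have hsub := image_ccIn (hcont A hAne) hABm (hBAm hw)
    rw [hφφ w (hBne w hw)] at hsub
    have : φ z ∈ connectedComponentIn B w := hsub ⟨z, hz, rfl⟩
    exact ⟨φ z, this, hφφ z hz0⟩
  intro I
  constructor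
  · rintro ⟨x, hx, rfl⟩
    exact ⟨φ x, hABm hx, (hkey x hx)⟩
    
  · rintro ⟨w, hw, hIw⟩
    have hI0 : ∀ a ∈ I, a ≠ 0 := by
      rintro a ha rfl
      have : φ (0:ℝ) ∈ φ '' I := ⟨0, ha, rfl⟩
      rw [hIw] at this
      have : (0:ℝ) ∈ B := connectedComponentIn_subset B w (by simpa [hφ] using this)
      exact h0B this
    refine ⟨φ w, hBAm hw, ?_⟩
    have hccA : φ '' connectedComponentIn A (φ w) = connectedComponentIn B w := by
      rw [hkey (φ w) (hBAm hw), hφφ w (hBne w hw)]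
    have him : φ '' I = φ '' connectedComponentIn A (φ w) := hIw.trans hccA.symm
    -- φ injective on nonzeros
    ext a
    constructor
    · intro ha
      have : φ a ∈ φ '' connectedComponentIn A (φ w) := him ▸ ⟨a, ha, rfl⟩
      rcases this with ⟨b, hb, hba⟩
      have hb0 : b ≠ 0 := hAne b (connectedComponentIn_subset A (φ w) hb)
      have : b = a := by
        have := congrArg φ hba
        rwa [hφφ b hb0, hφφ a (hI0 a ha)] at this
      exact this ▸ hb
    · intro ha
      have : φ a ∈ φ '' I := him.symm ▸ ⟨a, ha, rfl⟩
      rcases this with ⟨b, hb, hba⟩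
      have ha0 : a ≠ 0 := hAne a (connectedComponentIn_subset A (φ w) ha)
      have : b = a := by
        have := congrArg φ hba
        rwa [hφφ b (hI0 b hb), hφφ a ha0] at this
      exact this ▸ hb
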